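/- Let σ: Π → Γ be a strong formal subdivision of rank 0 between lower Eulerian posets, where Γ is a lower order ideal in an Eulerian poset B. Then the extension Π̃ of Π over B is lower Eulerian and the extension σ̃: Π̃ → B of σ is a strong formal subdivision. Moreover, if Γ ⊊ B then Π̃ is Eulerian. -/

import Mathlib

open scoped Classical

noncomputable section

namespace CDIndex

variable {α β : Type}

/-- The natural rank function of a graded poset: `rho x` is one less than the largest
cardinality of a chain contained in `Set.Iic x` (i.e. the length of a maximal chain of
the interval `[0̂, x]`). -/
def rho [PartialOrder α] (x : α) : ℕ :=
  sSup {k : ℕ | ∃ s : Finset α,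
    IsChain (· ≤ ·) (s : Set α) ∧ (s : Set α) ⊆ Set.Iic x ∧ s.card = k + 1}

/-- A subset `S` of a poset is graded of rank `n` if every maximal chain of `S`
has exactly `n + 1` elements (i.e. length `n`). -/
def IsGradedSetOfRank [PartialOrder α] (S : Set α) (n : ℕ) : Prop :=
  ∀ s : Finset α, (s : Set α) ⊆ S → IsChain (· ≤ ·) (s : Set α) →
    (∀ t : Finset α, (t : Set α) ⊆ S → IsChain (· ≤ ·) (t : Set α) → s ⊆ t → s = t) →
    s.card = n + 1

/-- A poset is graded of rank `n` if every maximal chain has length `n`. -/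
def IsGradedOfRank (α : Type) [PartialOrder α] (n : ℕ) : Prop :=
  IsGradedSetOfRank (Set.univ : Set α) n

/-- Every interval `[s, t]` with `s < t`, `s, t ∈ S`, has equally many elements of even
rank and of odd rank. -/
def BalancedIntervalsIn [PartialOrder α] (S : Set α) : Prop :=
  ∀ s ∈ S, ∀ t ∈ S, s < t →
    {y ∈ Set.Icc s t | Even (rho y)}.ncard = {y ∈ Set.Icc s t | Odd (rho y)}.ncard

/-- An Eulerian poset of rank `n`: a graded poset with `0̂` and `1̂` in which every
interval of positive length has equally many elements of each parity of rank. -/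
def IsEulerianOfRank (α : Type) [PartialOrder α] (n : ℕ) : Prop :=
  (∃ b : α, ∀ z, b ≤ z) ∧ (∃ t : α, ∀ z, z ≤ t) ∧
    IsGradedOfRank α n ∧ BalancedIntervalsIn (Set.univ : Set α)

/-- A lower Eulerian poset of rank `n`: a graded poset with `0̂` all of whose intervals
are Eulerian. -/
def IsLowerEulerianOfRank (α : Type) [PartialOrder α] (n : ℕ) : Prop :=
  (∃ b : α, ∀ z, b ≤ z) ∧ IsGradedOfRank α n ∧ BalancedIntervalsIn (Set.univ : Set α)

/-- A lower order ideal `S` (of a poset) which is lower Eulerian of rank `n`. -/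
def IsLowerEulerianSetOfRank [PartialOrder α] (S : Set α) (n : ℕ) : Prop :=
  IsGradedSetOfRank S n ∧ BalancedIntervalsIn S

/-- The boundary of (a lower order ideal `S` of) a graded poset of rank `n`: the lower
order ideal generated by the rank `n - 1` elements which are covered by exactly one
element. -/
def boundaryIn [PartialOrder α] (S : Set α) (n : ℕ) : Set α :=
  {y | y ∈ S ∧ ∃ x ∈ S, rho x = n - 1 ∧ {z ∈ S | x ⋖ z}.ncard = 1 ∧ y ≤ x}

/-- The boundary `∂P` of a graded poset of rank `n`. -/
def boundary (α : Type) [PartialOrder α] (n : ℕ) : Set α :=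
  boundaryIn (Set.univ : Set α) n

/-- `α` is a near-Eulerian poset of rank `n`: it is obtained from an Eulerian poset `Q`
of rank `n + 1` by removing the maximal element and one element `q` of rank `n`. -/
def IsNearEulerianOfRank (α : Type) [PartialOrder α] [Finite α] (n : ℕ) : Prop :=
  ∃ (Q : Type) (_ : PartialOrder Q) (_ : Finite Q) (q top : Q),
    IsEulerianOfRank Q (n + 1) ∧ (∀ z, z ≤ top) ∧ rho q = n ∧ q ≠ top ∧
    Nonempty (α ≃o {x : Q // x ≠ q ∧ x ≠ top})

/-- `α` is (isomorphic to) the boundary of an Eulerian poset, where `α` has rank `n`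
(so the Eulerian poset has rank `n + 1`). -/
def IsBoundaryOfEulerianOfRank (α : Type) [PartialOrder α] [Finite α] (n : ℕ) : Prop :=
  ∃ (Q : Type) (_ : PartialOrder Q) (_ : Finite Q) (top : Q),
    IsEulerianOfRank Q (n + 1) ∧ (∀ z, z ≤ top) ∧
    Nonempty (α ≃o {x : Q // x ≠ top})

/-! ### Strong formal subdivisions -/

/-- A strong formal subdivision (of rank `0`, with the natural rank functions): an
order-preserving, rank-increasing, surjective map which is strongly surjective and
satisfies the alternating-sum condition on fibers. -/
def IsSFS {α β : Type} [PartialOrder α] [PartialOrder β] (φ : α → β) : Prop :=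
  Monotone φ ∧ (∀ y, rho y ≤ rho (φ y)) ∧ Function.Surjective φ ∧
  (∀ y x, φ y ≤ x → ∃ y', y ≤ y' ∧ φ y' = x ∧ rho y' = rho x) ∧
  (∀ y x, φ y ≤ x →
    (∑ᶠ y' ∈ {y' | φ y' = x ∧ y ≤ y'}, ((-1 : ℤ) ^ rho y')) = (-1) ^ rho x)

/-! ### Extensions of posets and poset maps -/

/-- The extension `Π̃ = Π ∪ (B ∖ Γ)` of a poset `Π` over `B`, along a map
`σ : Π → B` whose image is the lower order ideal `Γ = G ⊆ B`.  Elements are either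
elements of `Π` (`Sum.inl`) or elements of `B ∖ G` (`Sum.inr`). -/
@[ext] structure ExtP {α β : Type} (σ : α → β) (G : Set β) : Type where
  elt : α ⊕ {x : β // x ∉ G}

namespace ExtP

variable {σ : α → β} {G : Set β}

instance instPartialOrder [PartialOrder α] [PartialOrder β] : PartialOrder (ExtP σ G) where
  le p q := match p, q with
    | ⟨.inl y⟩, ⟨.inl y'⟩ => y ≤ y'
    | ⟨.inl y⟩, ⟨.inr x⟩ => ∃ y', y ≤ y' ∧ σ y' ≤ (x : β)
    | ⟨.inr _⟩, ⟨.inl _⟩ => False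
    | ⟨.inr x⟩, ⟨.inr x'⟩ => x ≤ x'
  le_refl p := by
    rcases p with ⟨y | x⟩
    · exact (le_refl y : y ≤ y)
    · exact (le_refl x : x ≤ x)
  le_trans p q r hpq hqr := by
    rcases p with ⟨yp | xp⟩ <;> rcases q with ⟨yq | xq⟩ <;> rcases r with ⟨yr | xr⟩
    · exact (le_trans (hpq : yp ≤ yq) (hqr : yq ≤ yr) : yp ≤ yr)
    · obtain ⟨y', h1, h2⟩ := (hqr : ∃ y', yq ≤ y' ∧ σ y' ≤ (xr : β))
      exact (⟨y', le_trans (hpq : yp ≤ yq) h1, h2⟩ : ∃ y', yp ≤ y' ∧ σ y' ≤ (xr : β))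
    · exact (hqr : False).elim
    · obtain ⟨y', h1, h2⟩ := (hpq : ∃ y', yp ≤ y' ∧ σ y' ≤ (xq : β))
      exact (⟨y', h1, le_trans h2 (hqr : (xq : β) ≤ (xr : β))⟩ :
        ∃ y', yp ≤ y' ∧ σ y' ≤ (xr : β))
    · exact (hpq : False).elim
    · exact (hpq : False).elim
    · exact (hqr : False).elim
    · exact (le_trans (hpq : xp ≤ xq) (hqr : xq ≤ xr) : xp ≤ xr)
  le_antisymm p q hpq hqp := by
    rcases p with ⟨yp | xp⟩ <;> rcases q with ⟨yq | xq⟩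
    · have h : yp = yq := le_antisymm (hpq : yp ≤ yq) (hqp : yq ≤ yp)
      subst h; rfl
    · exact (hqp : False).elim
    · exact (hpq : False).elim
    · have h : xp = xq := le_antisymm (hpq : xp ≤ xq) (hqp : xq ≤ xp)
      subst h; rfl

/-- The inclusion of `Π` into the extension. -/
def inclDom (y : α) : ExtP σ G := ⟨.inl y⟩

/-- The inclusion of `B ∖ Γ` into the extension. -/
def inclCompl (x : {x : β // x ∉ G}) : ExtP σ G := ⟨.inr x⟩

/-- The extension `σ̃ : Π̃ → B` of `σ`: it is `σ` on `Π` and the identity on `B ∖ Γ`. -/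
def extMap (σ : α → β) (G : Set β) (p : ExtP σ G) : β :=
  match p.elt with
  | .inl y => σ y
  | .inr x => (x : β)

def equivSum : ExtP σ G ≃ α ⊕ {x : β // x ∉ G} where
  toFun := elt
  invFun := mk
  left_inv _ := rfl
  right_inv _ := rfl

instance [Finite α] [Finite β] : Finite (ExtP σ G) := by
  have := Fintype.ofFinite α
  have := Fintype.ofFinite β
  exact Finite.of_equiv _ (equivSum (σ := σ) (G := G)).symm

end ExtP

set_option linter.unusedSectionVars false
set_option linter.unusedVariables false

namespace Aux

variable {P : Type} [PartialOrder P]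

/-- Maximal chain contained in `S`. -/
def MaxChainIn (S : Set P) (c : Finset P) : Prop :=
  (c : Set P) ⊆ S ∧ IsChain (· ≤ ·) (c : Set P) ∧
  ∀ t : Finset P, (t : Set P) ⊆ S → IsChain (· ≤ ·) (t : Set P) → c ⊆ t → c = t

lemma isGradedSetOfRank_iff (S : Set P) (n : ℕ) :
    IsGradedSetOfRank S n ↔ ∀ c : Finset P, MaxChainIn S c → c.card = n + 1 := by
  constructor
  · intro h c hc; exact h c hc.1 hc.2.1 hc.2.2
  · intro h c h1 h2 h3; exact h c ⟨h1, h2, h3⟩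

lemma exists_maxChainIn_extending [Finite P] (S : Set P) (c : Finset P)
    (hcS : (c : Set P) ⊆ S) (hcc : IsChain (· ≤ ·) (c : Set P)) :
    ∃ t : Finset P, c ⊆ t ∧ MaxChainIn S t := by
  have := Fintype.ofFinite P
  set F : Finset (Finset P) := Finset.univ.filter
    (fun t => c ⊆ t ∧ (t : Set P) ⊆ S ∧ IsChain (· ≤ ·) (t : Set P)) with hF
  have hcF : c ∈ F := by simp [hF, hcS, hcc]
  obtain ⟨t, htF, htmax⟩ := F.exists_max_image Finset.card ⟨c, hcF⟩
  simp only [hF, Finset.mem_filter, Finset.mem_univ, true_and] at htF htmax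
  refine ⟨t, htF.1, htF.2.1, htF.2.2, ?_⟩
  intro t' ht'S ht'c htt'
  exact Finset.eq_of_subset_of_card_le htt'
    (htmax t' ⟨htF.1.trans htt', ht'S, ht'c⟩)

lemma MaxChainIn.mem_of_insert {S : Set P} {c : Finset P} (hc : MaxChainIn S c)
    {z : P} (hz : z ∈ S) (hch : IsChain (· ≤ ·) ((insert z c : Finset P) : Set P)) :
    z ∈ c := by
  classical
  have h := hc.2.2 (insert z c) ?_ hch (Finset.subset_insert _ _)
  · rw [h]; exact Finset.mem_insert_self _ _
  · intro w hw
    simp only [Finset.coe_insert, Set.mem_insert_iff] at hw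
    rcases hw with rfl | hw
    · exact hz
    · exact hc.1 hw

/-- Build a chain by inserting a comparable element. -/
lemma chain_insert {c : Finset P} (hc : IsChain (· ≤ ·) (c : Set P)) {z : P}
    (h : ∀ w ∈ c, z ≤ w ∨ w ≤ z) :
    IsChain (· ≤ ·) ((insert z c : Finset P) : Set P) := by
  classical
  rw [Finset.coe_insert]
  exact hc.insert (fun b hb _ => h b hb)

lemma chain_exists_greatest {c : Finset P} (hc : IsChain (· ≤ ·) (c : Set P))
    (hne : c.Nonempty) : ∃ a ∈ c, ∀ b ∈ c, b ≤ a := by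
  obtain ⟨a, ha, hmax⟩ := c.exists_maximal hne
  refine ⟨a, ha, fun b hb => ?_⟩
  rcases eq_or_ne b a with rfl | hne'
  · exact le_refl _
  · rcases hc hb ha hne' with h | h
    · exact h
    · exact hmax hb h

lemma chain_exists_least {c : Finset P} (hc : IsChain (· ≤ ·) (c : Set P))
    (hne : c.Nonempty) : ∃ a ∈ c, ∀ b ∈ c, a ≤ b := by
  obtain ⟨a, ha, hmin⟩ := c.exists_minimal hne
  refine ⟨a, ha, fun b hb => ?_⟩
  rcases eq_or_ne b a with rfl | hne'
  · exact le_refl _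
  · rcases hc hb ha hne' with h | h
    · exact hmin hb h
    · exact h

/-! ### rho basics -/

def rhoSet (x : P) : Set ℕ :=
  {k : ℕ | ∃ s : Finset P,
    IsChain (· ≤ ·) (s : Set P) ∧ (s : Set P) ⊆ Set.Iic x ∧ s.card = k + 1}

lemma rho_def (x : P) : rho x = sSup (rhoSet x) := rfl

lemma rhoSet_nonempty (x : P) : (rhoSet x).Nonempty := by
  refine ⟨0, {x}, ?_, ?_, by simp⟩
  · simp [IsChain]
  · simp

lemma rhoSet_bddAbove [Finite P] (x : P) : BddAbove (rhoSet x) := by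
  have := Fintype.ofFinite P
  refine ⟨Fintype.card P, fun k hk => ?_⟩
  obtain ⟨s, _, _, hcard⟩ := hk
  have := Finset.card_le_univ s
  omega

lemma chain_card_le_rho [Finite P] {x : P} {c : Finset P}
    (hcc : IsChain (· ≤ ·) (c : Set P)) (hcs : (c : Set P) ⊆ Set.Iic x) :
    c.card ≤ rho x + 1 := by
  rcases Finset.eq_empty_or_nonempty c with rfl | hne
  · simp
  · have hmem : c.card - 1 ∈ rhoSet x := by
      refine ⟨c, hcc, hcs, ?_⟩
      have := Finset.card_pos.mpr hne
      omega
    have := le_csSup (rhoSet_bddAbove x) hmem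
    rw [rho_def]
    omega

lemma rho_mem_rhoSet [Finite P] (x : P) : rho x ∈ rhoSet x :=
  Nat.sSup_mem (rhoSet_nonempty x) (rhoSet_bddAbove x)

lemma exists_rho_chain [Finite P] (x : P) :
    ∃ c : Finset P, IsChain (· ≤ ·) (c : Set P) ∧ (c : Set P) ⊆ Set.Iic x ∧
      c.card = rho x + 1 :=
  rho_mem_rhoSet x

lemma rho_le_of_forall [Finite P] {x : P} {k : ℕ}
    (h : ∀ c : Finset P, IsChain (· ≤ ·) (c : Set P) → (c : Set P) ⊆ Set.Iic x →
      c.card ≤ k + 1) : rho x ≤ k := by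
  rw [rho_def]
  refine csSup_le (rhoSet_nonempty x) (fun j hj => ?_)
  obtain ⟨c, h1, h2, h3⟩ := hj
  have := h c h1 h2
  omega

lemma rho_mono [Finite P] {x y : P} (h : x ≤ y) : rho x ≤ rho y := by
  obtain ⟨c, h1, h2, h3⟩ := exists_rho_chain x
  have := chain_card_le_rho h1 (h2.trans (Set.Iic_subset_Iic.mpr h))
  omega

lemma rho_lt_of_lt [Finite P] {x y : P} (h : x < y) : rho x < rho y := by
  classical
  obtain ⟨c, h1, h2, h3⟩ := exists_rho_chain x
  have hyc : y ∉ c := fun hy => absurd ((h2 hy).trans_lt h) (lt_irrefl y)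
  have hch : IsChain (· ≤ ·) ((insert y c : Finset P) : Set P) :=
    chain_insert h1 (fun w hw => Or.inr ((h2 hw).trans h.le))
  have hsub : ((insert y c : Finset P) : Set P) ⊆ Set.Iic y := by
    intro w hw
    simp only [Finset.coe_insert, Set.mem_insert_iff] at hw
    rcases hw with rfl | hw
    · exact le_refl _
    · exact (h2 hw).trans h.le
  have := chain_card_le_rho hch hsub
  rw [Finset.card_insert_of_notMem hyc] at this
  omega

lemma rho_eq_zero_of_least {x : P} (h : ∀ z, z ≤ x → z = x) : rho x = 0 := by
  rw [rho_def]
  refine Nat.le_zero.mp (csSup_le (rhoSet_nonempty x) (fun k hk => ?_))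
  obtain ⟨s, _, hsub, hcard⟩ := hk
  have : s ⊆ {x} := by
    intro w hw
    simp only [Finset.mem_singleton]
    exact h w (hsub hw)
  have := Finset.card_le_card this
  simp only [Finset.card_singleton] at this
  omega


/-! ### graded theory -/

section Graded
variable [Finite P] {n : ℕ}

lemma maxChainIn_mem_left {x : P} {c : Finset P} (hc : MaxChainIn (Set.Iic x) c) :
    x ∈ c :=
  hc.mem_of_insert (Set.mem_Iic.mpr le_rfl)
    (chain_insert hc.2.1 (fun w hw => Or.inr (hc.1 hw)))

lemma maxChainIn_mem_right {x : P} {c : Finset P} (hc : MaxChainIn (Set.Ici x) c) :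
    x ∈ c :=
  hc.mem_of_insert (Set.mem_Ici.mpr le_rfl)
    (chain_insert hc.2.1 (fun w hw => Or.inl (hc.1 hw)))

lemma splice_card (Hn : IsGradedOfRank P n) {x : P} {c c3 : Finset P}
    (hc : MaxChainIn (Set.Iic x) c) (hc3 : MaxChainIn (Set.Ici x) c3) :
    c.card + c3.card = n + 2 := by
  classical
  have hxc : x ∈ c := maxChainIn_mem_left hc
  have hxc3 : x ∈ c3 := maxChainIn_mem_right hc3
  have hchain : IsChain (· ≤ ·) ((c ∪ c3 : Finset P) : Set P) := by
    intro a ha b hb hab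
    simp only [Finset.coe_union, Set.mem_union, Finset.mem_coe] at ha hb
    rcases ha with ha | ha <;> rcases hb with hb | hb
    · exact hc.2.1 ha hb hab
    · exact Or.inl ((hc.1 ha).trans (hc3.1 hb))
    · exact Or.inr ((hc.1 hb).trans (hc3.1 ha))
    · exact hc3.2.1 ha hb hab
  have hmax : MaxChainIn (Set.univ) (c ∪ c3) := by
    refine ⟨by simp, hchain, ?_⟩
    intro t _ htc htt
    refine Finset.Subset.antisymm htt (fun w hw => ?_)
    have hwx : w ≤ x ∨ x ≤ w := by
      rcases eq_or_ne w x with rfl | hne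
      · exact Or.inl le_rfl
      · exact htc hw (htt (Finset.mem_union_left _ hxc)) hne
    rcases hwx with hwx | hwx
    · refine Finset.mem_union_left _ (hc.mem_of_insert (Set.mem_Iic.mpr hwx) ?_)
      refine chain_insert hc.2.1 (fun v hv => ?_)
      rcases eq_or_ne w v with rfl | hne
      · exact Or.inl le_rfl
      · exact (htc hw (htt (Finset.mem_union_left _ hv)) hne).imp id id
    · refine Finset.mem_union_right _ (hc3.mem_of_insert (Set.mem_Ici.mpr hwx) ?_)
      refine chain_insert hc3.2.1 (fun v hv => ?_)
      rcases eq_or_ne w v with rfl | hne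
      · exact Or.inl le_rfl
      · exact (htc hw (htt (Finset.mem_union_right _ hv)) hne).imp id id
  have hcard : (c ∪ c3).card = n + 1 :=
    (isGradedSetOfRank_iff _ _).mp Hn _ hmax
  have hint : c ∩ c3 = {x} := by
    refine Finset.Subset.antisymm ?_ ?_
    · intro w hw
      rw [Finset.mem_inter] at hw
      have h1 := hc.1 (by exact_mod_cast hw.1)
      have h2 := hc3.1 (by exact_mod_cast hw.2)
      simp only [Finset.mem_singleton]
      exact le_antisymm h1 h2
    · intro w hw
      rw [Finset.mem_singleton] at hw
      subst hw
      exact Finset.mem_inter.mpr ⟨hxc, hxc3⟩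
  have := Finset.card_union_add_card_inter c c3
  rw [hcard, hint] at this
  simp only [Finset.card_singleton] at this
  omega

lemma maxChainIn_Iic_card (Hn : IsGradedOfRank P n) {x : P} {c : Finset P}
    (hc : MaxChainIn (Set.Iic x) c) : c.card = rho x + 1 := by
  obtain ⟨c3, _, hc3⟩ := exists_maxChainIn_extending (Set.Ici x) {x}
    (by simp) (by simp [IsChain])
  have h1 := splice_card Hn hc hc3
  -- rho x + 1 = n + 2 - c3.card
  obtain ⟨c0, hc0c, hc0s, hc0card⟩ := exists_rho_chain x
  obtain ⟨t, hc0t, ht⟩ := exists_maxChainIn_extending (Set.Iic x) c0 hc0s hc0c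
  have h2 := splice_card Hn ht hc3
  have h3 : c0.card ≤ t.card := Finset.card_le_card hc0t
  have h4 : t.card ≤ rho x + 1 := chain_card_le_rho ht.2.1 ht.1
  omega

lemma maxChainIn_Icc_card (Hn : IsGradedOfRank P n) {x y : P} (hxy : x ≤ y)
    {c : Finset P} (hc : MaxChainIn (Set.Icc x y) c) :
    c.card + rho x = rho y + 1 := by
  classical
  have hxc : x ∈ c := hc.mem_of_insert (Set.mem_Icc.mpr ⟨le_rfl, hxy⟩)
    (chain_insert hc.2.1 (fun w hw => Or.inl (hc.1 hw).1))
  obtain ⟨c1, _, hc1⟩ := exists_maxChainIn_extending (Set.Iic x) {x}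
    (by simp) (by simp [IsChain])
  have hxc1 : x ∈ c1 := maxChainIn_mem_left hc1
  have hchain : IsChain (· ≤ ·) ((c1 ∪ c : Finset P) : Set P) := by
    intro a ha b hb hab
    simp only [Finset.coe_union, Set.mem_union, Finset.mem_coe] at ha hb
    rcases ha with ha | ha <;> rcases hb with hb | hb
    · exact hc1.2.1 ha hb hab
    · exact Or.inl ((hc1.1 ha).trans (hc.1 hb).1)
    · exact Or.inr ((hc1.1 hb).trans (hc.1 ha).1)
    · exact hc.2.1 ha hb hab
  have hmax : MaxChainIn (Set.Iic y) (c1 ∪ c) := by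
    refine ⟨?_, hchain, ?_⟩
    · intro w hw
      simp only [Finset.coe_union, Set.mem_union, Finset.mem_coe] at hw
      rcases hw with hw | hw
      · exact Set.mem_Iic.mpr ((hc1.1 hw).trans hxy)
      · exact Set.mem_Iic.mpr (hc.1 hw).2
    · intro t hts htc htt
      refine Finset.Subset.antisymm htt (fun w hw => ?_)
      have hwy : w ≤ y := hts hw
      have hwx : w ≤ x ∨ x ≤ w := by
        rcases eq_or_ne w x with rfl | hne
        · exact Or.inl le_rfl
        · exact htc hw (htt (Finset.mem_union_left _ hxc1)) hne
      rcases hwx with hwx | hwx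
      · refine Finset.mem_union_left _ (hc1.mem_of_insert (Set.mem_Iic.mpr hwx) ?_)
        refine chain_insert hc1.2.1 (fun v hv => ?_)
        rcases eq_or_ne w v with rfl | hne
        · exact Or.inl le_rfl
        · exact (htc hw (htt (Finset.mem_union_left _ hv)) hne).imp id id
      · refine Finset.mem_union_right _
          (hc.mem_of_insert (Set.mem_Icc.mpr ⟨hwx, hwy⟩) ?_)
        refine chain_insert hc.2.1 (fun v hv => ?_)
        rcases eq_or_ne w v with rfl | hne
        · exact Or.inl le_rfl
        · exact (htc hw (htt (Finset.mem_union_right _ hv)) hne).imp id id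
  have hcard := maxChainIn_Iic_card Hn hmax
  have hcard1 := maxChainIn_Iic_card Hn hc1
  have hint : c1 ∩ c = {x} := by
    refine Finset.Subset.antisymm ?_ ?_
    · intro w hw
      rw [Finset.mem_inter] at hw
      have h1 := hc1.1 (by exact_mod_cast hw.1)
      have h2 := (hc.1 (by exact_mod_cast hw.2)).1
      simp only [Finset.mem_singleton]
      exact le_antisymm h1 h2
    · intro w hw
      rw [Finset.mem_singleton] at hw
      subst hw
      exact Finset.mem_inter.mpr ⟨hxc1, hxc⟩
  have := Finset.card_union_add_card_inter c1 c
  rw [hcard, hint] at this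
  simp only [Finset.card_singleton] at this
  omega

lemma chain_card_le_Icc (Hn : IsGradedOfRank P n) {x y : P} (hxy : x ≤ y)
    {c : Finset P} (hcc : IsChain (· ≤ ·) (c : Set P))
    (hcs : (c : Set P) ⊆ Set.Icc x y) : c.card + rho x ≤ rho y + 1 := by
  obtain ⟨t, hct, ht⟩ := exists_maxChainIn_extending (Set.Icc x y) c hcs hcc
  have := maxChainIn_Icc_card Hn hxy ht
  have := Finset.card_le_card hct
  omega

lemma exists_cocover (Hn : IsGradedOfRank P n) {x y : P} (h : x < y) :
    ∃ z, x ≤ z ∧ z < y ∧ rho z + 1 = rho y := by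
  classical
  obtain ⟨c, _, hc⟩ := exists_maxChainIn_extending (Set.Icc x y) {x}
    (by simp [h.le]) (by simp [IsChain])
  have hcard := maxChainIn_Icc_card Hn h.le hc
  have hrho := rho_lt_of_lt h
  have hc2 : 2 ≤ c.card := by omega
  have hyc : y ∈ c := hc.mem_of_insert (Set.mem_Icc.mpr ⟨h.le, le_rfl⟩)
    (chain_insert hc.2.1 (fun w hw => Or.inr (hc.1 hw).2))
  set c' := c.erase y with hc'
  have hcc' : c = insert y c' := (Finset.insert_erase hyc).symm
  have hc'card : c'.card + 1 = c.card := by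
    rw [hc', Finset.card_erase_of_mem hyc]; omega
  have hc'ne : c'.Nonempty := Finset.card_pos.mp (by omega)
  have hc'chain : IsChain (· ≤ ·) (c' : Set P) :=
    hc.2.1.mono (by exact_mod_cast Finset.erase_subset _ _)
  obtain ⟨z, hzc', hzgr⟩ := chain_exists_greatest hc'chain hc'ne
  have hzc : z ∈ c := Finset.mem_of_mem_erase hzc'
  have hzy : z < y := lt_of_le_of_ne (hc.1 hzc).2 (Finset.ne_of_mem_erase hzc')
  have hxz : x ≤ z := (hc.1 hzc).1
  refine ⟨z, hxz, hzy, ?_⟩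
  have hmax : MaxChainIn (Set.Icc x z) c' := by
    refine ⟨?_, hc'chain, ?_⟩
    · intro w hw
      have hwc : w ∈ c := Finset.mem_of_mem_erase (by exact_mod_cast hw)
      exact Set.mem_Icc.mpr ⟨(hc.1 hwc).1, hzgr _ (by exact_mod_cast hw)⟩
    · intro t hts htc htt
      refine Finset.Subset.antisymm htt (fun w hw => ?_)
      have hwz : w ≤ z := (hts hw).2
      have hwc : w ∈ c := by
        refine hc.mem_of_insert (Set.mem_Icc.mpr ⟨(hts hw).1, hwz.trans hzy.le⟩) ?_
        refine chain_insert hc.2.1 (fun v hv => ?_)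
        rcases eq_or_ne v y with rfl | hvy
        · exact Or.inl (hwz.trans hzy.le)
        · have hvc' : v ∈ c' := Finset.mem_erase.mpr ⟨hvy, hv⟩
          rcases eq_or_ne w v with rfl | hne
          · exact Or.inl le_rfl
          · exact (htc hw (htt hvc') hne).imp id id
      exact Finset.mem_erase.mpr ⟨fun hwy => absurd (hwy ▸ hwz : y ≤ z) (not_le_of_gt hzy), hwc⟩
  have := maxChainIn_Icc_card Hn hxz hmax
  omega

lemma rho_eq_of_greatest (Hn : IsGradedOfRank P n) {t : P} (ht : ∀ z, z ≤ t) :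
    rho t = n := by
  obtain ⟨c, _, hc⟩ := exists_maxChainIn_extending (Set.univ : Set P) ∅
    (by simp) (by simp [IsChain])
  have h1 : c.card = n + 1 := (isGradedSetOfRank_iff _ _).mp Hn _ hc
  have hc' : MaxChainIn (Set.Iic t) c := by
    refine ⟨fun w _ => Set.mem_Iic.mpr (ht w), hc.2.1, ?_⟩
    intro u _ huc huu
    exact hc.2.2 u (by simp) huc huu
  have := maxChainIn_Iic_card Hn hc'
  omega

end Graded

/-! ### rho transfer -/

lemma rho_map_eq {Q : Type} [PartialOrder Q] [Finite P] [Finite Q]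
    (f : P → Q) (hf : ∀ a b : P, f a ≤ f b ↔ a ≤ b) (x : P)
    (hr : ∀ q, q ≤ f x → ∃ p, f p = q) : rho (f x) = rho x := by
  classical
  have hinj : Function.Injective f := fun a b hab =>
    le_antisymm ((hf a b).mp hab.le) ((hf b a).mp hab.ge)
  apply le_antisymm
  · refine rho_le_of_forall (fun d hdc hds => ?_)
    set g : Q → P := fun q => if h : ∃ p, f p = q then h.choose else x with hg
    have hfg : ∀ q ∈ d, f (g q) = q := by
      intro q hq
      have h : ∃ p, f p = q := hr q (hds hq)
      simp only [hg, dif_pos h]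
      exact h.choose_spec
    have hcard : (d.image g).card = d.card := by
      refine Finset.card_image_of_injOn (fun a ha b hb hab => ?_)
      rw [← hfg a ha, ← hfg b hb, hab]
    have hchain : IsChain (· ≤ ·) ((d.image g : Finset P) : Set P) := by
      intro a ha b hb hab
      simp only [Finset.coe_image, Set.mem_image, Finset.mem_coe] at ha hb
      obtain ⟨qa, hqa, rfl⟩ := ha
      obtain ⟨qb, hqb, rfl⟩ := hb
      have : qa ≠ qb := fun h => hab (by rw [h])
      rcases hdc hqa hqb this with h | h
      · exact Or.inl ((hf _ _).mp (by rwa [hfg qa hqa, hfg qb hqb]))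
      · exact Or.inr ((hf _ _).mp (by rwa [hfg qa hqa, hfg qb hqb]))
    have hsub : ((d.image g : Finset P) : Set P) ⊆ Set.Iic x := by
      intro a ha
      simp only [Finset.coe_image, Set.mem_image, Finset.mem_coe] at ha
      obtain ⟨q, hq, rfl⟩ := ha
      exact Set.mem_Iic.mpr ((hf _ _).mp (by rw [hfg q hq]; exact hds hq))
    have := chain_card_le_rho hchain hsub
    omega
  · refine rho_le_of_forall (fun d hdc hds => ?_)
    have hcard : (d.image f).card = d.card := Finset.card_image_of_injective _ hinj
    have hchain : IsChain (· ≤ ·) ((d.image f : Finset Q) : Set Q) := by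
      intro a ha b hb hab
      simp only [Finset.coe_image, Set.mem_image, Finset.mem_coe] at ha hb
      obtain ⟨pa, hpa, rfl⟩ := ha
      obtain ⟨pb, hpb, rfl⟩ := hb
      have : pa ≠ pb := fun h => hab (by rw [h])
      rcases hdc hpa hpb this with h | h
      · exact Or.inl ((hf _ _).mpr h)
      · exact Or.inr ((hf _ _).mpr h)
    have hsub : ((d.image f : Finset Q) : Set Q) ⊆ Set.Iic (f x) := by
      intro a ha
      simp only [Finset.coe_image, Set.mem_image, Finset.mem_coe] at ha
      obtain ⟨p, hp, rfl⟩ := ha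
      exact Set.mem_Iic.mpr ((hf _ _).mpr (hds hp))
    have := chain_card_le_rho hchain hsub
    omega

/-! ### parity counting -/

lemma sum_neg_one_pow_eq (s : Finset P) (f : P → ℕ) :
    ∑ a ∈ s, (-1 : ℤ) ^ (f a) =
      ((s.filter fun a => Even (f a)).card : ℤ) -
        ((s.filter fun a => Odd (f a)).card : ℤ) := by
  classical
  rw [← Finset.sum_filter_add_sum_filter_not s (fun a => Even (f a))]
  have h1 : ∑ a ∈ s.filter (fun a => Even (f a)), (-1 : ℤ) ^ (f a) =
      ((s.filter fun a => Even (f a)).card : ℤ) := by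
    rw [Finset.sum_congr rfl (fun a ha => Even.neg_one_pow (Finset.mem_filter.mp ha).2)]
    simp
  have h2 : ∑ a ∈ s.filter (fun a => ¬Even (f a)), (-1 : ℤ) ^ (f a) =
      -((s.filter fun a => Odd (f a)).card : ℤ) := by
    have : (s.filter fun a => ¬Even (f a)) = (s.filter fun a => Odd (f a)) := by
      simp [Nat.not_even_iff_odd]
    rw [this, Finset.sum_congr rfl
      (fun a ha => Odd.neg_one_pow (Finset.mem_filter.mp ha).2)]
    simp
  rw [h1, h2]
  ring

lemma balanced_iff_sum [Finite P] (S : Set P) :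
    ({a ∈ S | Even (rho a)}.ncard = {a ∈ S | Odd (rho a)}.ncard) ↔
      ∑ a ∈ (Set.toFinite S).toFinset, (-1 : ℤ) ^ (rho a) = 0 := by
  classical
  have he : {a ∈ S | Even (rho a)} =
      ↑((Set.toFinite S).toFinset.filter (fun a => Even (rho a))) := by
    ext a; simp [Set.Finite.mem_toFinset]
  have ho : {a ∈ S | Odd (rho a)} =
      ↑((Set.toFinite S).toFinset.filter (fun a => Odd (rho a))) := by
    ext a; simp [Set.Finite.mem_toFinset]
  rw [he, ho, Set.ncard_coe_finset, Set.ncard_coe_finset,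
    sum_neg_one_pow_eq]
  constructor
  · intro h; rw [h]; ring
  · intro h
    have := sub_eq_zero.mp h
    exact_mod_cast this


section Ext
variable [PartialOrder α] [Finite α] [OrderBot α] [PartialOrder β] [Finite β]
  [OrderBot β] [OrderTop β] {G : Set β}

def mkInl (σ : α → G) (y : α) : ExtP (fun y => (σ y : β)) G := ⟨.inl y⟩
def mkInr (σ : α → G) (x : {x : β // x ∉ G}) : ExtP (fun y => (σ y : β)) G := ⟨.inr x⟩

variable {σ : α → G}

lemma mkInl_injective : Function.Injective (mkInl (G := G) σ) := by
  intro a b h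
  exact Sum.inl.inj (congrArg ExtP.elt h)

lemma mkInr_injective : Function.Injective (mkInr (G := G) σ) := by
  intro a b h
  exact Sum.inr.inj (congrArg ExtP.elt h)

lemma mkInl_ne_mkInr (a : α) (z : {x : β // x ∉ G}) : mkInl σ a ≠ mkInr σ z := by
  intro h
  exact Sum.inl_ne_inr (congrArg ExtP.elt h)

lemma le_inl_inl {a b : α} : mkInl σ a ≤ mkInl σ b ↔ a ≤ b := Iff.rfl

lemma le_inl_inr {a : α} {x : {x : β // x ∉ G}} :
    mkInl σ a ≤ mkInr σ x ↔ ∃ y', a ≤ y' ∧ (σ y' : β) ≤ x.val := Iff.rfl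

lemma not_le_inr_inl {a : α} {x : {x : β // x ∉ G}} : ¬ (mkInr σ x ≤ mkInl σ a) :=
  fun h => h

lemma le_inr_inr {x x' : {x : β // x ∉ G}} :
    mkInr σ x ≤ mkInr σ x' ↔ x.val ≤ x'.val := Iff.rfl

lemma le_inl_inr' (hmono : Monotone σ) {a : α} {x : {x : β // x ∉ G}} :
    mkInl σ a ≤ mkInr σ x ↔ (σ a : β) ≤ x.val := by
  rw [le_inl_inr]
  constructor
  · rintro ⟨y', h1, h2⟩
    exact le_trans (Subtype.coe_le_coe.mpr (hmono h1)) h2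
  · intro h
    exact ⟨a, le_rfl, h⟩

lemma cases_ext (p : ExtP (fun y => (σ y : β)) G) :
    (∃ y, p = mkInl σ y) ∨ (∃ z, p = mkInr σ z) := by
  rcases p with ⟨y | z⟩
  · exact Or.inl ⟨y, rfl⟩
  · exact Or.inr ⟨z, rfl⟩

lemma bot_mem_G (σ : α → G) (hG : IsLowerSet G) : (⊥ : β) ∈ G :=
  hG bot_le (σ ⊥).2

lemma ext_bot (hG : IsLowerSet G) (hsurj : Function.Surjective σ) :
    ∀ p : ExtP (fun y => (σ y : β)) G, mkInl σ ⊥ ≤ p := by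
  intro p
  rcases cases_ext p with ⟨y, rfl⟩ | ⟨z, rfl⟩
  · exact le_inl_inl.mpr bot_le
  · obtain ⟨y', hy'⟩ := hsurj ⟨⊥, bot_mem_G σ hG⟩
    refine le_inl_inr.mpr ⟨y', bot_le, ?_⟩
    rw [hy']
    exact bot_le

lemma rho_mkInl (y : α) : rho (mkInl σ y) = rho y := by
  refine rho_map_eq (mkInl σ) (fun a b => le_inl_inl) y (fun q hq => ?_)
  rcases cases_ext q with ⟨y', rfl⟩ | ⟨z, rfl⟩
  · exact ⟨y', rfl⟩
  · exact absurd hq not_le_inr_inl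

lemma rho_val (hG : IsLowerSet G) (g : G) : rho (g : β) = rho g := by
  refine rho_map_eq (Subtype.val) (fun a b => Subtype.coe_le_coe) g (fun q hq => ?_)
  exact ⟨⟨q, hG hq g.2⟩, rfl⟩

/-- Lifting a chain in `G` through `σ`. -/
lemma lift_chain (hG : IsLowerSet G) (hσ : IsSFS σ) :
    ∀ (k : ℕ) (c : Finset β), c.card = k + 1 → (c : Set β) ⊆ G →
      IsChain (· ≤ ·) (c : Set β) →
    ∃ (d : Finset α) (ytop : α), IsChain (· ≤ ·) (d : Set α) ∧ d.card = c.card ∧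
      (∀ y ∈ d, (σ y : β) ∈ c) ∧ ytop ∈ d ∧ (∀ y ∈ d, y ≤ ytop) := by
  intro k
  induction k with
  | zero =>
    intro c hcard hsub _
    obtain ⟨z, rfl⟩ := Finset.card_eq_one.mp hcard
    have hz : z ∈ G := hsub (by simp)
    obtain ⟨y0, hy0⟩ := hσ.2.2.1 ⟨z, hz⟩
    refine ⟨{y0}, y0, by simp [IsChain], by simp, ?_, by simp, by simp⟩
    intro y hy
    rw [Finset.mem_singleton] at hy
    subst hy
    rw [hy0]
    simp
  | succ k ih =>
    intro c hcard hsub hchain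
    have hne : c.Nonempty := Finset.card_pos.mp (by omega)
    obtain ⟨z, hzc, hzgr⟩ := chain_exists_greatest hchain hne
    set c' := c.erase z with hc'
    have hc'card : c'.card = k + 1 := by
      rw [hc', Finset.card_erase_of_mem hzc]; omega
    have hc'sub : (c' : Set β) ⊆ G := fun w hw =>
      hsub (Finset.mem_coe.mpr (Finset.mem_of_mem_erase (Finset.mem_coe.mp hw)))
    have hc'chain : IsChain (· ≤ ·) (c' : Set β) :=
      hchain.mono (by exact_mod_cast Finset.erase_subset _ _)
    obtain ⟨d', ytop', hd'c, hd'card, hd'map, hd'mem, hd'le⟩ :=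
      ih c' hc'card hc'sub hc'chain
    have hzG : z ∈ G := hsub hzc
    have hcond : σ ytop' ≤ (⟨z, hzG⟩ : G) := by
      rw [← Subtype.coe_le_coe]
      exact hzgr _ (Finset.mem_of_mem_erase (hd'map _ hd'mem))
    obtain ⟨ynew, hge, heq, -⟩ := hσ.2.2.2.1 ytop' ⟨z, hzG⟩ hcond
    have hynew : ynew ∉ d' := by
      intro hmem
      have := hd'map _ hmem
      rw [heq] at this
      exact Finset.notMem_erase z c this
    refine ⟨insert ynew d', ynew, ?_, ?_, ?_, Finset.mem_insert_self _ _, ?_⟩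
    · exact chain_insert hd'c (fun w hw => Or.inr ((hd'le w hw).trans hge))
    · rw [Finset.card_insert_of_notMem hynew, hd'card, hcard, hc'card]
    · intro y hy
      rcases Finset.mem_insert.mp hy with rfl | hy
      · rw [heq]; exact hzc
      · exact Finset.mem_of_mem_erase (hd'map _ hy)
    · intro y hy
      rcases Finset.mem_insert.mp hy with rfl | hy
      · exact le_rfl
      · exact (hd'le y hy).trans hge

end Ext
section Ext2
variable [PartialOrder α] [Finite α] [OrderBot α] [PartialOrder β] [Finite β]
  [OrderBot β] [OrderTop β] {G : Set β} {σ : α → G}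

/-- The `inl`-part of a finset in the extension. -/
def partY (σ : α → G) (e : Finset (ExtP (fun y => (σ y : β)) G)) : Finset α := by
  have := Fintype.ofFinite α
  exact Finset.univ.filter (fun y : α => mkInl σ y ∈ e)

/-- The `inr`-part of a finset in the extension. -/
def partD (σ : α → G) (e : Finset (ExtP (fun y => (σ y : β)) G)) :
    Finset {x : β // x ∉ G} := by
  have := Fintype.ofFinite β
  have : Fintype {x : β // x ∉ G} := Fintype.ofFinite _
  exact Finset.univ.filter (fun z => mkInr σ z ∈ e)

lemma mem_partY {e : Finset (ExtP (fun y => (σ y : β)) G)} {y : α} :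
    y ∈ partY σ e ↔ mkInl σ y ∈ e := by
  simp [partY]

lemma mem_partD {e : Finset (ExtP (fun y => (σ y : β)) G)} {z : {x : β // x ∉ G}} :
    z ∈ partD σ e ↔ mkInr σ z ∈ e := by
  simp [partD]

lemma eq_parts_union (e : Finset (ExtP (fun y => (σ y : β)) G)) :
    e = (partY σ e).image (mkInl σ) ∪ (partD σ e).image (mkInr σ) := by
  ext p
  constructor
  · intro hp
    rcases cases_ext p with ⟨y, rfl⟩ | ⟨z, rfl⟩
    · exact Finset.mem_union_left _
        (Finset.mem_image.mpr ⟨y, mem_partY.mpr hp, rfl⟩)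
    · exact Finset.mem_union_right _
        (Finset.mem_image.mpr ⟨z, mem_partD.mpr hp, rfl⟩)
  · intro hp
    rcases Finset.mem_union.mp hp with hp | hp
    · obtain ⟨y, hy, rfl⟩ := Finset.mem_image.mp hp
      exact mem_partY.mp hy
    · obtain ⟨z, hz, rfl⟩ := Finset.mem_image.mp hp
      exact mem_partD.mp hz

lemma card_parts (e : Finset (ExtP (fun y => (σ y : β)) G)) :
    e.card = (partY σ e).card + (partD σ e).card := by
  classical
  conv_lhs => rw [eq_parts_union e]
  rw [Finset.card_union_of_disjoint, Finset.card_image_of_injective _ mkInl_injective,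
    Finset.card_image_of_injective _ mkInr_injective]
  rw [Finset.disjoint_left]
  intro p hp hp'
  obtain ⟨y, _, rfl⟩ := Finset.mem_image.mp hp
  obtain ⟨z, _, hz⟩ := Finset.mem_image.mp hp'
  exact mkInl_ne_mkInr y z hz.symm

lemma partY_chain {e : Finset (ExtP (fun y => (σ y : β)) G)}
    (he : IsChain (· ≤ ·) (e : Set (ExtP (fun y => (σ y : β)) G))) :
    IsChain (· ≤ ·) ((partY σ e : Finset α) : Set α) := by
  intro a ha b hb hne
  have ha' := mem_partY.mp (Finset.mem_coe.mp ha)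
  have hb' := mem_partY.mp (Finset.mem_coe.mp hb)
  have : mkInl σ a ≠ mkInl σ b := fun h => hne (mkInl_injective h)
  rcases he ha' hb' this with h | h
  · exact Or.inl (le_inl_inl.mp h)
  · exact Or.inr (le_inl_inl.mp h)

lemma partD_chain {e : Finset (ExtP (fun y => (σ y : β)) G)}
    (he : IsChain (· ≤ ·) (e : Set (ExtP (fun y => (σ y : β)) G))) :
    IsChain (· ≤ ·) ((partD σ e : Finset {x : β // x ∉ G}) : Set {x : β // x ∉ G}) := by
  intro a ha b hb hne
  have ha' := mem_partD.mp (Finset.mem_coe.mp ha)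
  have hb' := mem_partD.mp (Finset.mem_coe.mp hb)
  have : mkInr σ a ≠ mkInr σ b := fun h => hne (mkInr_injective h)
  rcases he ha' hb' this with h | h
  · exact Or.inl (le_inr_inr.mp h)
  · exact Or.inr (le_inr_inr.mp h)

lemma valD_chain {d : Finset {x : β // x ∉ G}}
    (hd : IsChain (· ≤ ·) ((d : Finset {x : β // x ∉ G}) : Set {x : β // x ∉ G})) :
    IsChain (· ≤ ·) ((d.image Subtype.val : Finset β) : Set β) := by
  intro a ha b hb hne
  simp only [Finset.coe_image, Set.mem_image, Finset.mem_coe] at ha hb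
  obtain ⟨za, hza, rfl⟩ := ha
  obtain ⟨zb, hzb, rfl⟩ := hb
  have : za ≠ zb := fun h => hne (by rw [h])
  rcases hd hza hzb this with h | h
  · exact Or.inl h
  · exact Or.inr h

lemma chain_le_of_mem {e : Finset (ExtP (fun y => (σ y : β)) G)}
    (he : IsChain (· ≤ ·) (e : Set (ExtP (fun y => (σ y : β)) G)))
    {a : α} {z : {x : β // x ∉ G}} (ha : mkInl σ a ∈ e) (hz : mkInr σ z ∈ e) :
    mkInl σ a ≤ mkInr σ z := by
  rcases he ha hz (mkInl_ne_mkInr a z) with h | h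
  · exact h
  · exact absurd h not_le_inr_inl

/-- `rho` of an `inr`-element of the extension. -/
lemma rho_mkInr (hG : IsLowerSet G) (hσ : IsSFS σ) {n : ℕ}
    (Hnβ : IsGradedOfRank β n) (x : {x : β // x ∉ G}) :
    rho (mkInr σ x) = rho x.val := by
  classical
  apply le_antisymm
  · -- every chain below `inr x` has length at most `rho x`
    refine rho_le_of_forall (fun e hec hes => ?_)
    rw [card_parts e]
    have hYc := partY_chain hec
    have hDc := partD_chain hec
    rcases Finset.eq_empty_or_nonempty (partY σ e) with hY | ⟨ys, hys⟩
    · rw [hY]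
      simp only [Finset.card_empty, Nat.zero_add]
      have hsub : ((partD σ e).image Subtype.val : Set β) ⊆ Set.Iic x.val := by
        intro w hw
        simp only [Finset.coe_image, Set.mem_image, Finset.mem_coe] at hw
        obtain ⟨z, hz, rfl⟩ := hw
        have h : mkInr σ z ≤ mkInr σ x := hes (Finset.mem_coe.mpr (mem_partD.mp hz))
        exact Set.mem_Iic.mpr (le_inr_inr.mp h)
      have := chain_card_le_rho (valD_chain hDc) hsub
      rwa [Finset.card_image_of_injective _ Subtype.val_injective] at this
    · obtain ⟨ystar, hystar, hygr⟩ := chain_exists_greatest hYc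
        ⟨ys, Finset.mem_coe.mpr hys⟩
      have hystar' := mem_partY.mp (Finset.mem_coe.mp hystar)
      have hYcard : (partY σ e).card ≤ rho ystar + 1 := by
        refine chain_card_le_rho hYc (fun w hw => Set.mem_Iic.mpr ?_)
        exact hygr w hw
      have hrr : rho ystar ≤ rho ((σ ystar : β)) := by
        rw [rho_val hG]
        exact hσ.2.1 ystar
      rcases Finset.eq_empty_or_nonempty (partD σ e) with hD | ⟨zs, hzs⟩
      · rw [hD]
        simp only [Finset.card_empty, Nat.add_zero]
        have h1 : mkInl σ ystar ≤ mkInr σ x := hes (Finset.mem_coe.mpr hystar')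
        have h2 : (σ ystar : β) ≤ x.val := (le_inl_inr' hσ.1).mp h1
        have h3 : (σ ystar : β) < x.val :=
          lt_of_le_of_ne h2 (fun h => x.2 (h ▸ (σ ystar).2))
        have := rho_lt_of_lt h3
        omega
      · obtain ⟨zmin, hzmin, hzle⟩ := chain_exists_least hDc
          ⟨zs, Finset.mem_coe.mpr hzs⟩
        have hzmin' := mem_partD.mp (Finset.mem_coe.mp hzmin)
        have h1 : mkInl σ ystar ≤ mkInr σ zmin := chain_le_of_mem hec hystar' hzmin'
        have h2 : (σ ystar : β) ≤ zmin.val := (le_inl_inr' hσ.1).mp h1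
        have h3 : (σ ystar : β) < zmin.val :=
          lt_of_le_of_ne h2 (fun h => zmin.2 (h ▸ (σ ystar).2))
        have h4 := rho_lt_of_lt h3
        have hvsub : ((partD σ e).image Subtype.val : Set β) ⊆
            Set.Icc zmin.val x.val := by
          intro w hw
          simp only [Finset.coe_image, Set.mem_image, Finset.mem_coe] at hw
          obtain ⟨z, hz, rfl⟩ := hw
          have h : mkInr σ z ≤ mkInr σ x := hes (Finset.mem_coe.mpr (mem_partD.mp hz))
          exact Set.mem_Icc.mpr ⟨hzle z hz, le_inr_inr.mp h⟩
        have hzx : zmin.val ≤ x.val := by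
          have h : mkInr σ zmin ≤ mkInr σ x := hes (Finset.mem_coe.mpr hzmin')
          exact le_inr_inr.mp h
        have hDcard := chain_card_le_Icc Hnβ hzx (valD_chain hDc) hvsub
        rw [Finset.card_image_of_injective _ Subtype.val_injective] at hDcard
        omega
  · -- construct a chain below `inr x` of length `rho x`
    obtain ⟨c, hcc, hcs, hccard⟩ := exists_rho_chain x.val
    classical
    set cG := c.filter (fun w => w ∈ G) with hcG
    set cC := c.filter (fun w => w ∉ G) with hcC
    have hsplit : cG.card + cC.card = c.card := by
      rw [hcG, hcC]
      exact Finset.card_filter_add_card_filter_not _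
    have hGC : ∀ v ∈ cG, ∀ w ∈ cC, v ≤ w := by
      intro v hv w hw
      rw [hcG] at hv
      rw [hcC] at hw
      have hv' := Finset.mem_filter.mp hv
      have hw' := Finset.mem_filter.mp hw
      have hne : v ≠ w := fun h => hw'.2 (h ▸ hv'.2)
      rcases hcc (Finset.mem_coe.mpr hv'.1) (Finset.mem_coe.mpr hw'.1) hne with h | h
      · exact h
      · exact absurd (hG h hv'.2) hw'.2
    -- the inr part of the new chain
    have hcCnG : ∀ w ∈ cC, w ∉ G := by
      intro w hw
      rw [hcC, Finset.mem_filter] at hw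
      exact hw.2
    have hcCc : ∀ w ∈ cC, w ∈ c := by
      intro w hw
      rw [hcC] at hw
      exact Finset.mem_of_mem_filter _ hw
    set g : β → ExtP (fun y => (σ y : β)) G :=
      fun w => if h : w ∉ G then mkInr σ ⟨w, h⟩ else mkInl σ ⊥ with hg
    have hgval : ∀ w (h : w ∉ G), g w = mkInr σ ⟨w, h⟩ := by
      intro w h
      rw [hg]
      simp [h]
    set eC : Finset (ExtP (fun y => (σ y : β)) G) := cC.image g with heC
    have heCcard : eC.card = cC.card := by
      rw [heC]
      refine Finset.card_image_of_injOn (fun a ha b hb hab => ?_)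
      rw [hgval a (hcCnG a ha), hgval b (hcCnG b hb)] at hab
      exact congrArg Subtype.val (mkInr_injective hab)
    have heCmem : ∀ p ∈ eC, ∃ (z : β) (hz : z ∉ G), z ∈ cC ∧ p = mkInr σ ⟨z, hz⟩ := by
      intro p hp
      rw [heC] at hp
      obtain ⟨z, hz, rfl⟩ := Finset.mem_image.mp hp
      exact ⟨z, hcCnG z hz, hz, hgval z (hcCnG z hz)⟩
    have heCchain : IsChain (· ≤ ·) (eC : Set (ExtP (fun y => (σ y : β)) G)) := by
      intro p hp q hq hne
      obtain ⟨zp, hzp, hzpc, rfl⟩ := heCmem p (Finset.mem_coe.mp hp)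
      obtain ⟨zq, hzq, hzqc, rfl⟩ := heCmem q (Finset.mem_coe.mp hq)
      have : zp ≠ zq := by
        intro h; subst h; exact hne rfl
      have hcCchain : IsChain (· ≤ ·) (cC : Set β) := by
        refine hcc.mono ?_
        intro w hw
        exact Finset.mem_coe.mpr (hcCc w (Finset.mem_coe.mp hw))
      rcases hcCchain (Finset.mem_coe.mpr hzpc) (Finset.mem_coe.mpr hzqc) this with h | h
      · exact Or.inl (le_inr_inr.mpr h)
      · exact Or.inr (le_inr_inr.mpr h)
    have heCsub : (eC : Set (ExtP (fun y => (σ y : β)) G)) ⊆ Set.Iic (mkInr σ x) := by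
      intro p hp
      obtain ⟨z, hz, hzc, rfl⟩ := heCmem p (Finset.mem_coe.mp hp)
      have h : z ≤ x.val := hcs (Finset.mem_coe.mpr (hcCc z hzc))
      exact Set.mem_Iic.mpr (le_inr_inr.mpr h)
    rcases Finset.eq_empty_or_nonempty cG with hcGe | hcGne
    · -- no G part
      have : c.card ≤ rho (mkInr σ x) + 1 := by
        rw [← hsplit, hcGe, Finset.card_empty, Nat.zero_add, ← heCcard]
        exact chain_card_le_rho heCchain heCsub
      omega
    · obtain ⟨d, ytop, hdc, hdcard, hdmap, hdtop, hdle⟩ :=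
        lift_chain hG hσ (cG.card - 1) cG
          (by have := Finset.card_pos.mpr hcGne; omega)
          (fun w hw => by
            have h := Finset.mem_coe.mp hw
            rw [hcG, Finset.mem_filter] at h
            exact h.2)
          (hcc.mono (fun w hw => by
            have h := Finset.mem_coe.mp hw
            rw [hcG, Finset.mem_filter] at h
            exact Finset.mem_coe.mpr h.1))
      set eD : Finset (ExtP (fun y => (σ y : β)) G) := d.image (mkInl σ) with heD
      have heDcard : eD.card = d.card := Finset.card_image_of_injective _ mkInl_injective
      have heDmem : ∀ p ∈ eD, ∃ y ∈ d, p = mkInl σ y := by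
        intro p hp
        obtain ⟨y, hy, rfl⟩ := Finset.mem_image.mp hp
        exact ⟨y, hy, rfl⟩
      have hDisj : Disjoint eD eC := by
        rw [Finset.disjoint_left]
        intro p hp hp'
        obtain ⟨y, _, rfl⟩ := heDmem p hp
        obtain ⟨z, hz, _, h⟩ := heCmem _ hp'
        exact mkInl_ne_mkInr y ⟨z, hz⟩ h
      have hchain : IsChain (· ≤ ·) ((eD ∪ eC : Finset _) :
          Set (ExtP (fun y => (σ y : β)) G)) := by
        intro p hp q hq hne
        simp only [Finset.coe_union, Set.mem_union, Finset.mem_coe] at hp hq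
        rcases hp with hp | hp <;> rcases hq with hq | hq
        · obtain ⟨yp, hyp, rfl⟩ := heDmem p hp
          obtain ⟨yq, hyq, rfl⟩ := heDmem q hq
          have : yp ≠ yq := fun h => hne (by rw [h])
          rcases hdc (Finset.mem_coe.mpr hyp) (Finset.mem_coe.mpr hyq) this with h | h
          · exact Or.inl (le_inl_inl.mpr h)
          · exact Or.inr (le_inl_inl.mpr h)
        · obtain ⟨yp, hyp, rfl⟩ := heDmem p hp
          obtain ⟨z, hz, hzc, rfl⟩ := heCmem q hq
          refine Or.inl (le_inl_inr.mpr ⟨yp, le_rfl, ?_⟩)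
          exact hGC _ (hdmap _ hyp) _ hzc
        · obtain ⟨z, hz, hzc, rfl⟩ := heCmem p hp
          obtain ⟨yq, hyq, rfl⟩ := heDmem q hq
          refine Or.inr (le_inl_inr.mpr ⟨yq, le_rfl, ?_⟩)
          exact hGC _ (hdmap _ hyq) _ hzc
        · exact heCchain (Finset.mem_coe.mpr hp) (Finset.mem_coe.mpr hq) hne
      have hsub : ((eD ∪ eC : Finset _) : Set (ExtP (fun y => (σ y : β)) G)) ⊆
          Set.Iic (mkInr σ x) := by
        intro p hp
        simp only [Finset.coe_union, Set.mem_union, Finset.mem_coe] at hp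
        rcases hp with hp | hp
        · obtain ⟨y, hy, rfl⟩ := heDmem p hp
          refine Set.mem_Iic.mpr (le_inl_inr.mpr ⟨y, le_rfl, ?_⟩)
          have h := hdmap _ hy
          rw [hcG] at h
          exact hcs (Finset.mem_coe.mpr (Finset.mem_of_mem_filter _ h))
        · exact heCsub (Finset.mem_coe.mpr hp)
      have hcard : (eD ∪ eC).card = c.card := by
        rw [Finset.card_union_of_disjoint hDisj, heDcard, heCcard, hdcard, hsplit]
      have := chain_card_le_rho hchain hsub
      omega

end Ext2
section Ext3
variable [PartialOrder α] [Finite α] [OrderBot α] [PartialOrder β] [Finite β]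
  [OrderBot β] [OrderTop β] {G : Set β} {σ : α → G}

lemma G_eq_univ_rank (hGle : IsGradedSetOfRank G m) (Hnβ : IsGradedOfRank β n)
    (hU : G = Set.univ) : m = n := by
  obtain ⟨cβ, -, hcβ⟩ := exists_maxChainIn_extending (Set.univ : Set β) ∅
    (by simp) (by simp [IsChain])
  have h1 : cβ.card = n + 1 := (isGradedSetOfRank_iff _ _).mp Hnβ _ hcβ
  have hmaxG : MaxChainIn G cβ := by
    refine ⟨by rw [hU]; exact fun w _ => trivial, hcβ.2.1, ?_⟩
    intro t _ htc htt
    exact hcβ.2.2 t (by simp) htc htt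
  have h2 : cβ.card = m + 1 := (isGradedSetOfRank_iff _ _).mp hGle _ hmaxG
  omega

lemma top_not_mem (hG : IsLowerSet G) (hU : G ≠ Set.univ) : (⊤ : β) ∉ G := by
  intro h
  exact hU (Set.eq_univ_iff_forall.mpr (fun z => hG le_top h))

lemma ext_graded (hG : IsLowerSet G) (hσ : IsSFS σ) {n m : ℕ}
    (Hnβ : IsGradedOfRank β n) (Hmα : IsGradedOfRank α m)
    (hGle : IsGradedSetOfRank G m) :
    IsGradedOfRank (ExtP (fun y => (σ y : β)) G) n := by
  classical
  rw [IsGradedOfRank, isGradedSetOfRank_iff]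
  intro e hmc
  have hec := hmc.2.1
  -- the bottom element belongs to every maximal chain
  have hbotmem : mkInl σ ⊥ ∈ e :=
    hmc.mem_of_insert trivial
      (chain_insert hec (fun w hw => Or.inl (ext_bot hG hσ.2.2.1 w)))
  have hYne : (partY σ e).Nonempty := ⟨⊥, mem_partY.mpr hbotmem⟩
  have hYc := partY_chain hec
  have hDc := partD_chain hec
  obtain ⟨ystar, hystar, hygr⟩ := chain_exists_greatest hYc
    ⟨hYne.choose, Finset.mem_coe.mpr hYne.choose_spec⟩
  have hystar' := mem_partY.mp (Finset.mem_coe.mp hystar)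
  rw [card_parts e]
  by_cases hU : G = Set.univ
  · -- D part empty
    have hD : partD σ e = ∅ := by
      refine Finset.eq_empty_of_forall_notMem (fun z _ => ?_)
      exact z.2 (hU ▸ Set.mem_univ z.val)
    rw [hD]
    simp only [Finset.card_empty, Nat.add_zero]
    have hmax : MaxChainIn (Set.univ : Set α) (partY σ e) := by
      refine ⟨by simp, hYc, ?_⟩
      intro t _ htc htt
      refine Finset.Subset.antisymm htt (fun w hw => ?_)
      refine mem_partY.mpr (hmc.mem_of_insert trivial ?_)
      refine chain_insert hec (fun p hp => ?_)
      rcases cases_ext p with ⟨y, rfl⟩ | ⟨z, rfl⟩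
      · have hy : y ∈ t := htt (mem_partY.mpr hp)
        rcases eq_or_ne w y with rfl | hne
        · exact Or.inl le_rfl
        · rcases htc (Finset.mem_coe.mpr hw) (Finset.mem_coe.mpr hy) hne with h | h
          · exact Or.inl (le_inl_inl.mpr h)
          · exact Or.inr (le_inl_inl.mpr h)
      · exact absurd (hU ▸ Set.mem_univ z.val) z.2
    have h1 : (partY σ e).card = m + 1 := (isGradedSetOfRank_iff _ _).mp Hmα _ hmax
    rw [G_eq_univ_rank hGle Hnβ hU] at h1
    exact h1
  · -- D part nonempty, contains ⊤
    have htopG : (⊤ : β) ∉ G := top_not_mem hG hU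
    have htopmem : mkInr σ ⟨⊤, htopG⟩ ∈ e := by
      refine hmc.mem_of_insert trivial (chain_insert hec (fun p hp => Or.inr ?_))
      rcases cases_ext p with ⟨y, rfl⟩ | ⟨z, rfl⟩
      · exact le_inl_inr.mpr ⟨y, le_rfl, le_top⟩
      · exact le_inr_inr.mpr le_top
    have hDne : (partD σ e).Nonempty := ⟨⟨⊤, htopG⟩, mem_partD.mpr htopmem⟩
    obtain ⟨zmin, hzmin, hzle⟩ := chain_exists_least hDc
      ⟨hDne.choose, Finset.mem_coe.mpr hDne.choose_spec⟩
    have hzmin' := mem_partD.mp (Finset.mem_coe.mp hzmin)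
    -- KEY : σ ystar ≤ zmin and rho ystar + 1 = rho zmin
    have h1 : mkInl σ ystar ≤ mkInr σ zmin := chain_le_of_mem hec hystar' hzmin'
    obtain ⟨y', hy'ge, hy'le⟩ := le_inl_inr.mp h1
    have hy'Y : y' ∈ partY σ e := by
      refine mem_partY.mpr (hmc.mem_of_insert trivial ?_)
      refine chain_insert hec (fun p hp => ?_)
      rcases cases_ext p with ⟨y, rfl⟩ | ⟨z, rfl⟩
      · exact Or.inr (le_inl_inl.mpr ((hygr y (Finset.mem_coe.mpr
          (mem_partY.mpr hp))).trans hy'ge))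
      · refine Or.inl (le_inl_inr.mpr ⟨y', le_rfl, hy'le.trans ?_⟩)
        exact hzle z (Finset.mem_coe.mpr (mem_partD.mpr hp))
    have hy'eq : y' = ystar := le_antisymm
      (hygr y' (Finset.mem_coe.mpr hy'Y)) hy'ge
    subst hy'eq
    have hsle : (σ y' : β) ≤ zmin.val := hy'le
    have hslt : (σ y' : β) < zmin.val :=
      lt_of_le_of_ne hsle (fun h => zmin.2 (h ▸ (σ y').2))
    obtain ⟨z, hz1, hz2, hz3⟩ := exists_cocover Hnβ hslt
    have hzG : z ∈ G := by
      by_contra hzG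
      have hmem : mkInr σ ⟨z, hzG⟩ ∈ e := by
        refine hmc.mem_of_insert trivial (chain_insert hec (fun p hp => ?_))
        rcases cases_ext p with ⟨y, rfl⟩ | ⟨w, rfl⟩
        · exact Or.inr (le_inl_inr.mpr ⟨y', hygr y (Finset.mem_coe.mpr
            (mem_partY.mpr hp)), hz1⟩)
        · refine Or.inl (le_inr_inr.mpr (hz2.le.trans ?_))
          exact hzle w (Finset.mem_coe.mpr (mem_partD.mpr hp))
      have : zmin ≤ ⟨z, hzG⟩ := hzle _ (Finset.mem_coe.mpr (mem_partD.mpr hmem))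
      exact absurd (Subtype.coe_le_coe.mpr this) (not_le_of_gt hz2)
    have hcond : σ y' ≤ (⟨z, hzG⟩ : G) := by
      rw [← Subtype.coe_le_coe]
      exact hz1
    obtain ⟨y'', h1'', h2'', h3''⟩ := hσ.2.2.2.1 y' ⟨z, hzG⟩ hcond
    have hy''Y : y'' ∈ partY σ e := by
      refine mem_partY.mpr (hmc.mem_of_insert trivial ?_)
      refine chain_insert hec (fun p hp => ?_)
      rcases cases_ext p with ⟨y, rfl⟩ | ⟨w, rfl⟩
      · exact Or.inr (le_inl_inl.mpr ((hygr y (Finset.mem_coe.mpr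
          (mem_partY.mpr hp))).trans h1''))
      · refine Or.inl (le_inl_inr.mpr ⟨y'', le_rfl, ?_⟩)
        have : (σ y'' : β) = z := congrArg Subtype.val h2''
        rw [this]
        exact hz2.le.trans (hzle w (Finset.mem_coe.mpr (mem_partD.mpr hp)))
    have hy''eq : y'' = y' := le_antisymm (hygr y'' (Finset.mem_coe.mpr hy''Y)) h1''
    have hrho : rho y' + 1 = rho zmin.val := by
      rw [← hy''eq, h3'', ← rho_val hG ⟨z, hzG⟩]
      exact hz3
    -- partY is a maximal chain in Iic ystar
    have hYmax : MaxChainIn (Set.Iic y') (partY σ e) := by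
      refine ⟨fun w hw => Set.mem_Iic.mpr (hygr w hw), hYc, ?_⟩
      intro t hts htc htt
      refine Finset.Subset.antisymm htt (fun w hw => ?_)
      refine mem_partY.mpr (hmc.mem_of_insert trivial ?_)
      refine chain_insert hec (fun p hp => ?_)
      rcases cases_ext p with ⟨y, rfl⟩ | ⟨v, rfl⟩
      · have hy : y ∈ t := htt (mem_partY.mpr hp)
        rcases eq_or_ne w y with rfl | hne
        · exact Or.inl le_rfl
        · rcases htc (Finset.mem_coe.mpr hw) (Finset.mem_coe.mpr hy) hne with h | h
          · exact Or.inl (le_inl_inl.mpr h)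
          · exact Or.inr (le_inl_inl.mpr h)
      · refine Or.inl (le_inl_inr.mpr ⟨y', hts hw, hsle.trans ?_⟩)
        exact hzle v (Finset.mem_coe.mpr (mem_partD.mpr hp))
    have hYcard : (partY σ e).card = rho y' + 1 := maxChainIn_Iic_card Hmα hYmax
    -- partD maps to a maximal chain of Icc zmin ⊤
    have hDmax : MaxChainIn (Set.Icc zmin.val (⊤ : β)) ((partD σ e).image Subtype.val) := by
      refine ⟨?_, valD_chain hDc, ?_⟩
      · intro w hw
        simp only [Finset.coe_image, Set.mem_image, Finset.mem_coe] at hw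
        obtain ⟨v, hv, rfl⟩ := hw
        exact Set.mem_Icc.mpr ⟨hzle v (Finset.mem_coe.mpr hv), le_top⟩
      · intro t hts htc htt
        refine Finset.Subset.antisymm htt (fun w hw => ?_)
        have hwG : w ∉ G := by
          intro hwG
          exact zmin.2 (hG (hts hw).1 hwG)
        have hmem : mkInr σ ⟨w, hwG⟩ ∈ e := by
          refine hmc.mem_of_insert trivial (chain_insert hec (fun p hp => ?_))
          rcases cases_ext p with ⟨y, rfl⟩ | ⟨v, rfl⟩
          · exact Or.inr (le_inl_inr.mpr ⟨y', hygr y (Finset.mem_coe.mpr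
              (mem_partY.mpr hp)), hsle.trans (hts hw).1⟩)
          · have hv : v.val ∈ t := htt (Finset.mem_image.mpr
              ⟨v, mem_partD.mpr hp, rfl⟩)
            rcases eq_or_ne w v.val with heq | hne
            · exact Or.inl (le_inr_inr.mpr heq.le)
            · rcases htc (Finset.mem_coe.mpr hw) (Finset.mem_coe.mpr hv) hne with h | h
              · exact Or.inl (le_inr_inr.mpr h)
              · exact Or.inr (le_inr_inr.mpr h)
        exact Finset.mem_image.mpr ⟨⟨w, hwG⟩, mem_partD.mpr hmem, rfl⟩
    have hDcard : ((partD σ e).image Subtype.val).card + rho zmin.val = rho (⊤ : β) + 1 :=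
      maxChainIn_Icc_card Hnβ le_top hDmax
    rw [Finset.card_image_of_injective _ Subtype.val_injective] at hDcard
    have htop : rho (⊤ : β) = n := rho_eq_of_greatest Hnβ (fun z => le_top)
    omega

end Ext3
section Ext4
variable [PartialOrder α] [Finite α] [OrderBot α] [PartialOrder β] [Finite β]
  [OrderBot β] [OrderTop β] {G : Set β} {σ : α → G}

lemma ext_balanced (hG : IsLowerSet G) (hσ : IsSFS σ) {n : ℕ}
    (Hnβ : IsGradedOfRank β n)
    (hBbal : BalancedIntervalsIn (Set.univ : Set β))
    (hαbal : BalancedIntervalsIn (Set.univ : Set α)) :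
    BalancedIntervalsIn (Set.univ : Set (ExtP (fun y => (σ y : β)) G)) := by
  classical
  intro s _ t _ hst
  rcases cases_ext s with ⟨a, rfl⟩ | ⟨v, rfl⟩ <;> rcases cases_ext t with ⟨b, rfl⟩ | ⟨x, rfl⟩
  · -- inl / inl
    have hab : a < b := lt_of_le_of_ne (le_inl_inl.mp hst.le)
      (fun h => hst.ne (congrArg (mkInl σ) h))
    have he : {p ∈ Set.Icc (mkInl σ a) (mkInl σ b) | Even (rho p)} =
        mkInl σ '' {w ∈ Set.Icc a b | Even (rho w)} := by
      ext p
      constructor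
      · rintro ⟨hp, hev⟩
        rcases cases_ext p with ⟨y, rfl⟩ | ⟨z, rfl⟩
        · refine ⟨y, ⟨Set.mem_Icc.mpr ⟨le_inl_inl.mp hp.1, le_inl_inl.mp hp.2⟩, ?_⟩, rfl⟩
          rwa [rho_mkInl] at hev
        · exact absurd hp.2 not_le_inr_inl
      · rintro ⟨y, ⟨hy, hev⟩, rfl⟩
        exact ⟨⟨le_inl_inl.mpr (Set.mem_Icc.mp hy).1, le_inl_inl.mpr (Set.mem_Icc.mp hy).2⟩,
          by rwa [rho_mkInl]⟩
    have ho : {p ∈ Set.Icc (mkInl σ a) (mkInl σ b) | Odd (rho p)} =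
        mkInl σ '' {w ∈ Set.Icc a b | Odd (rho w)} := by
      ext p
      constructor
      · rintro ⟨hp, hev⟩
        rcases cases_ext p with ⟨y, rfl⟩ | ⟨z, rfl⟩
        · refine ⟨y, ⟨Set.mem_Icc.mpr ⟨le_inl_inl.mp hp.1, le_inl_inl.mp hp.2⟩, ?_⟩, rfl⟩
          rwa [rho_mkInl] at hev
        · exact absurd hp.2 not_le_inr_inl
      · rintro ⟨y, ⟨hy, hev⟩, rfl⟩
        exact ⟨⟨le_inl_inl.mpr (Set.mem_Icc.mp hy).1, le_inl_inl.mpr (Set.mem_Icc.mp hy).2⟩,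
          by rwa [rho_mkInl]⟩
    rw [he, ho, Set.ncard_image_of_injective _ mkInl_injective,
      Set.ncard_image_of_injective _ mkInl_injective]
    exact hαbal a trivial b trivial hab
  · -- inl / inr : the mixed case
    have hax : (σ a : β) ≤ x.val := (le_inl_inr' hσ.1).mp hst.le
    have haxlt : (σ a : β) < x.val := lt_of_le_of_ne hax (fun h => x.2 (h ▸ (σ a).2))
    have hbal := hBbal _ trivial _ trivial haxlt
    rw [balanced_iff_sum] at hbal ⊢
    have := Fintype.ofFinite α
    have := Fintype.ofFinite β
    have : Fintype {x : β // x ∉ G} := Fintype.ofFinite _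
    set FA : Finset α := Finset.univ.filter
      (fun y' => a ≤ y' ∧ (σ y' : β) ≤ x.val) with hFA
    set FIcc : Finset β := Finset.univ.filter
      (fun z => (σ a : β) ≤ z ∧ z ≤ x.val) with hFIcc
    set FG : Finset β := FIcc.filter (fun z => z ∈ G) with hFG
    set FnG : Finset β := FIcc.filter (fun z => z ∉ G) with hFnG
    set FB : Finset {x : β // x ∉ G} := Finset.univ.filter
      (fun z => (σ a : β) ≤ z.val ∧ z.val ≤ x.val) with hFB
    -- decompose the interval
    have hsplit : (Set.toFinite (Set.Icc (mkInl σ a) (mkInr σ x))).toFinset =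
        FA.image (mkInl σ) ∪ FB.image (mkInr σ) := by
      ext p
      rw [Set.Finite.mem_toFinset, Finset.mem_union]
      constructor
      · intro hp
        rcases cases_ext p with ⟨y, rfl⟩ | ⟨z, rfl⟩
        · refine Or.inl (Finset.mem_image.mpr ⟨y, ?_, rfl⟩)
          rw [hFA, Finset.mem_filter]
          exact ⟨Finset.mem_univ _, le_inl_inl.mp hp.1, (le_inl_inr' hσ.1).mp hp.2⟩
        · refine Or.inr (Finset.mem_image.mpr ⟨z, ?_, rfl⟩)
          rw [hFB, Finset.mem_filter]
          exact ⟨Finset.mem_univ _, (le_inl_inr' hσ.1).mp hp.1, le_inr_inr.mp hp.2⟩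
      · intro hp
        rcases hp with hp | hp
        · obtain ⟨y, hy, rfl⟩ := Finset.mem_image.mp hp
          rw [hFA, Finset.mem_filter] at hy
          exact ⟨le_inl_inl.mpr hy.2.1, (le_inl_inr' hσ.1).mpr hy.2.2⟩
        · obtain ⟨z, hz, rfl⟩ := Finset.mem_image.mp hp
          rw [hFB, Finset.mem_filter] at hz
          exact ⟨(le_inl_inr' hσ.1).mpr hz.2.1, le_inr_inr.mpr hz.2.2⟩
    rw [hsplit, Finset.sum_union, Finset.sum_image
      (fun p _ q _ h => mkInl_injective h), Finset.sum_image
      (fun p _ q _ h => mkInr_injective h)]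
    · have hsumA : ∑ y' ∈ FA, (-1 : ℤ) ^ rho (mkInl σ y') =
          ∑ z ∈ FG, (-1 : ℤ) ^ rho z := by
        have hmaps : ∀ y' ∈ FA, (σ y' : β) ∈ FG := by
          intro y' hy'
          rw [hFA, Finset.mem_filter] at hy'
          rw [hFG, Finset.mem_filter, hFIcc, Finset.mem_filter]
          exact ⟨⟨Finset.mem_univ _, Subtype.coe_le_coe.mpr (hσ.1 hy'.2.1), hy'.2.2⟩,
            (σ y').2⟩
        rw [← Finset.sum_fiberwise_of_maps_to hmaps (fun y' => (-1 : ℤ) ^ rho (mkInl σ y'))]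
        refine Finset.sum_congr rfl (fun z hz => ?_)
        rw [hFG, Finset.mem_filter] at hz
        have hzG : z ∈ G := hz.2
        rw [hFIcc, Finset.mem_filter] at hz
        have hcond : σ a ≤ (⟨z, hzG⟩ : G) := by
          rw [← Subtype.coe_le_coe]
          exact hz.1.2.1
        have hc5 := hσ.2.2.2.2 a ⟨z, hzG⟩ hcond
        have hset : {y' | σ y' = (⟨z, hzG⟩ : G) ∧ a ≤ y'} =
            ((FA.filter (fun y' => (σ y' : β) = z)) : Set α) := by
          ext y'
          simp only [Set.mem_setOf_eq, Finset.coe_filter, Finset.mem_coe,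
            Set.mem_setOf_eq, hFA, Finset.mem_filter, Finset.mem_univ, true_and]
          constructor
          · rintro ⟨h1, h2⟩
            have : (σ y' : β) = z := congrArg Subtype.val h1
            exact ⟨⟨h2, this ▸ hz.1.2.2⟩, this⟩
          · rintro ⟨⟨h2, -⟩, h1⟩
            exact ⟨Subtype.ext h1, h2⟩
        rw [hset, finsum_mem_coe_finset] at hc5
        have : ∑ y' ∈ FA.filter (fun y' => (σ y' : β) = z),
            (-1 : ℤ) ^ rho (mkInl σ y') =
            ∑ y' ∈ FA.filter (fun y' => (σ y' : β) = z), (-1 : ℤ) ^ rho y' :=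
          Finset.sum_congr rfl (fun y' _ => by rw [rho_mkInl])
        rw [this, hc5, ← rho_val hG ⟨z, hzG⟩]
      have hsumB : ∑ z ∈ FB, (-1 : ℤ) ^ rho (mkInr σ z) =
          ∑ z ∈ FnG, (-1 : ℤ) ^ rho z := by
        have himg : FB.image Subtype.val = FnG := by
          ext w
          rw [hFnG, Finset.mem_filter, hFIcc, Finset.mem_filter]
          constructor
          · intro hw
            obtain ⟨z, hz, rfl⟩ := Finset.mem_image.mp hw
            rw [hFB, Finset.mem_filter] at hz
            exact ⟨⟨Finset.mem_univ _, hz.2.1, hz.2.2⟩, z.2⟩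
          · rintro ⟨⟨-, h1, h2⟩, hw⟩
            refine Finset.mem_image.mpr ⟨⟨w, hw⟩, ?_, rfl⟩
            rw [hFB, Finset.mem_filter]
            exact ⟨Finset.mem_univ _, h1, h2⟩
        rw [← himg, Finset.sum_image (fun p _ q _ h => Subtype.val_injective h)]
        refine Finset.sum_congr rfl (fun z _ => ?_)
        rw [rho_mkInr hG hσ Hnβ]
      rw [hsumA, hsumB, hFG, hFnG, Finset.sum_filter_add_sum_filter_not]
      have : FIcc = (Set.toFinite (Set.Icc ((σ a : β)) x.val)).toFinset := by
        ext w
        rw [Set.Finite.mem_toFinset, hFIcc, Finset.mem_filter]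
        simp [Set.mem_Icc]
      rw [this]
      exact hbal
    · rw [Finset.disjoint_left]
      intro p hp hp'
      obtain ⟨y, _, rfl⟩ := Finset.mem_image.mp hp
      obtain ⟨z, _, hz⟩ := Finset.mem_image.mp hp'
      exact mkInl_ne_mkInr y z hz.symm
  · -- inr / inl : impossible
    exact absurd hst.le not_le_inr_inl
  · -- inr / inr
    have hvx : v.val < x.val := by
      refine lt_of_le_of_ne (le_inr_inr.mp hst.le) (fun h => hst.ne ?_)
      exact congrArg (mkInr σ) (Subtype.ext h)
    set f : β → ExtP (fun y => (σ y : β)) G :=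
      fun w => if h : w ∉ G then mkInr σ ⟨w, h⟩ else mkInl σ ⊥ with hf
    have hnG : ∀ w, v.val ≤ w → w ∉ G := fun w hw h => v.2 (hG hw h)
    have hfval : ∀ w (h : w ∉ G), f w = mkInr σ ⟨w, h⟩ := by
      intro w h
      rw [hf]
      simp [h]
    have key : ∀ (Q : ℕ → Prop),
        {p ∈ Set.Icc (mkInr σ v) (mkInr σ x) | Q (rho p)} =
          f '' {w ∈ Set.Icc v.val x.val | Q (rho w)} := by
      intro Q
      ext p
      constructor
      · rintro ⟨hp, hq⟩
        rcases cases_ext p with ⟨y, rfl⟩ | ⟨z, rfl⟩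
        · exact absurd hp.1 not_le_inr_inl
        · refine ⟨z.val, ⟨Set.mem_Icc.mpr ⟨le_inr_inr.mp hp.1, le_inr_inr.mp hp.2⟩, ?_⟩, ?_⟩
          · rwa [rho_mkInr hG hσ Hnβ] at hq
          · rw [hfval z.val z.2]
      · rintro ⟨w, ⟨hw, hq⟩, rfl⟩
        have hwG : w ∉ G := hnG w (Set.mem_Icc.mp hw).1
        rw [hfval w hwG]
        refine ⟨⟨le_inr_inr.mpr (Set.mem_Icc.mp hw).1, le_inr_inr.mpr (Set.mem_Icc.mp hw).2⟩, ?_⟩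
        rwa [rho_mkInr hG hσ Hnβ]
    have hinj : ∀ (Q : ℕ → Prop), Set.InjOn f {w ∈ Set.Icc v.val x.val | Q (rho w)} := by
      intro Q w1 hw1 w2 hw2 heq
      have h1 : w1 ∉ G := hnG w1 (Set.mem_Icc.mp hw1.1).1
      have h2 : w2 ∉ G := hnG w2 (Set.mem_Icc.mp hw2.1).1
      rw [hfval w1 h1, hfval w2 h2] at heq
      exact congrArg Subtype.val (mkInr_injective heq)
    rw [key (fun k => Even k), key (fun k => Odd k),
      Set.ncard_image_of_injOn (hinj _), Set.ncard_image_of_injOn (hinj _)]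
    exact hBbal v.val trivial x.val trivial hvx

end Ext4

section Ext5
variable [PartialOrder α] [Finite α] [OrderBot α] [PartialOrder β] [Finite β]
  [OrderBot β] [OrderTop β] {G : Set β} {σ : α → G}

lemma extMap_inl (y : α) :
    ExtP.extMap (fun y => (σ y : β)) G (mkInl σ y) = (σ y : β) := rfl

lemma extMap_inr (z : {x : β // x ∉ G}) :
    ExtP.extMap (fun y => (σ y : β)) G (mkInr σ z) = z.val := rfl

lemma ext_sfs (hG : IsLowerSet G) (hσ : IsSFS σ) {n : ℕ}
    (Hnβ : IsGradedOfRank β n) :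
    IsSFS (ExtP.extMap (fun y => (σ y : β)) G) := by
  classical
  refine ⟨?_, ?_, ?_, ?_, ?_⟩
  · -- monotone
    intro p q hpq
    rcases cases_ext p with ⟨a, rfl⟩ | ⟨v, rfl⟩ <;>
      rcases cases_ext q with ⟨b, rfl⟩ | ⟨z, rfl⟩
    · exact Subtype.coe_le_coe.mpr (hσ.1 (le_inl_inl.mp hpq))
    · rw [extMap_inl, extMap_inr]
      exact (le_inl_inr' hσ.1).mp hpq
    · exact absurd hpq not_le_inr_inl
    · exact le_inr_inr.mp hpq
  · -- rank increasing
    intro p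
    rcases cases_ext p with ⟨a, rfl⟩ | ⟨v, rfl⟩
    · rw [extMap_inl, rho_mkInl, rho_val hG]
      exact hσ.2.1 a
    · rw [extMap_inr, rho_mkInr hG hσ Hnβ]
  · -- surjective
    intro w
    by_cases hw : w ∈ G
    · obtain ⟨y, hy⟩ := hσ.2.2.1 ⟨w, hw⟩
      exact ⟨mkInl σ y, by rw [extMap_inl, hy]⟩
    · exact ⟨mkInr σ ⟨w, hw⟩, rfl⟩
  · -- strong surjectivity
    intro p w hpw
    rcases cases_ext p with ⟨a, rfl⟩ | ⟨v, rfl⟩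
    · rw [extMap_inl] at hpw
      by_cases hw : w ∈ G
      · have hcond : σ a ≤ (⟨w, hw⟩ : G) := by
          rw [← Subtype.coe_le_coe]; exact hpw
        obtain ⟨y', h1, h2, h3⟩ := hσ.2.2.2.1 a ⟨w, hw⟩ hcond
        refine ⟨mkInl σ y', le_inl_inl.mpr h1, ?_, ?_⟩
        · rw [extMap_inl, h2]
        · rw [rho_mkInl, h3, ← rho_val hG ⟨w, hw⟩]
      · refine ⟨mkInr σ ⟨w, hw⟩, le_inl_inr.mpr ⟨a, le_rfl, hpw⟩, rfl, ?_⟩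
        rw [rho_mkInr hG hσ Hnβ]
    · rw [extMap_inr] at hpw
      have hw : w ∉ G := fun h => v.2 (hG hpw h)
      refine ⟨mkInr σ ⟨w, hw⟩, le_inr_inr.mpr hpw, rfl, ?_⟩
      rw [rho_mkInr hG hσ Hnβ]
  · -- alternating fiber sums
    intro p w hpw
    rcases cases_ext p with ⟨a, rfl⟩ | ⟨v, rfl⟩
    · rw [extMap_inl] at hpw
      by_cases hw : w ∈ G
      · have hcond : σ a ≤ (⟨w, hw⟩ : G) := by
          rw [← Subtype.coe_le_coe]; exact hpw
        have hset : {p' | ExtP.extMap (fun y => (σ y : β)) G p' = w ∧ mkInl σ a ≤ p'} =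
            mkInl σ '' {y' | σ y' = (⟨w, hw⟩ : G) ∧ a ≤ y'} := by
          ext p'
          constructor
          · rintro ⟨h1, h2⟩
            rcases cases_ext p' with ⟨y', rfl⟩ | ⟨z, rfl⟩
            · rw [extMap_inl] at h1
              exact ⟨y', ⟨Subtype.ext h1, le_inl_inl.mp h2⟩, rfl⟩
            · rw [extMap_inr] at h1
              exact absurd (h1 ▸ hw) z.2
          · rintro ⟨y', ⟨h1, h2⟩, rfl⟩
            refine ⟨?_, le_inl_inl.mpr h2⟩
            rw [extMap_inl, h1]
        rw [hset, finsum_mem_image (mkInl_injective.injOn)]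
        have hcongr : ∑ᶠ (y' : α) (_ : y' ∈ {y' | σ y' = (⟨w, hw⟩ : G) ∧ a ≤ y'}),
            (-1 : ℤ) ^ rho (mkInl σ y') =
            ∑ᶠ (y' : α) (_ : y' ∈ {y' | σ y' = (⟨w, hw⟩ : G) ∧ a ≤ y'}),
            (-1 : ℤ) ^ rho y' :=
          finsum_mem_congr rfl (fun y' _ => by rw [rho_mkInl])
        rw [hcongr, hσ.2.2.2.2 a ⟨w, hw⟩ hcond, ← rho_val hG ⟨w, hw⟩]
      · have hset : {p' | ExtP.extMap (fun y => (σ y : β)) G p' = w ∧ mkInl σ a ≤ p'} =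
            {mkInr σ ⟨w, hw⟩} := by
          ext p'
          constructor
          · rintro ⟨h1, h2⟩
            rcases cases_ext p' with ⟨y', rfl⟩ | ⟨z, rfl⟩
            · rw [extMap_inl] at h1
              exact absurd (h1 ▸ (σ y').2) hw
            · rw [extMap_inr] at h1
              simp only [Set.mem_singleton_iff]
              exact congrArg (mkInr σ) (Subtype.ext h1)
          · rintro rfl
            exact ⟨rfl, le_inl_inr.mpr ⟨a, le_rfl, hpw⟩⟩
        rw [hset, finsum_mem_singleton, rho_mkInr hG hσ Hnβ]
    · rw [extMap_inr] at hpw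
      have hw : w ∉ G := fun h => v.2 (hG hpw h)
      have hset : {p' | ExtP.extMap (fun y => (σ y : β)) G p' = w ∧ mkInr σ v ≤ p'} =
          {mkInr σ ⟨w, hw⟩} := by
        ext p'
        constructor
        · rintro ⟨h1, h2⟩
          rcases cases_ext p' with ⟨y', rfl⟩ | ⟨z, rfl⟩
          · rw [extMap_inl] at h1
            exact absurd (h1 ▸ (σ y').2) hw
          · rw [extMap_inr] at h1
            simp only [Set.mem_singleton_iff]
            exact congrArg (mkInr σ) (Subtype.ext h1)
        · rintro rfl
          exact ⟨rfl, le_inr_inr.mpr hpw⟩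
      rw [hset, finsum_mem_singleton, rho_mkInr hG hσ Hnβ]

lemma ext_top (hG : IsLowerSet G) (hU : G ≠ Set.univ) :
    ∀ p : ExtP (fun y => (σ y : β)) G, p ≤ mkInr σ ⟨⊤, top_not_mem hG hU⟩ := by
  intro p
  rcases cases_ext p with ⟨y, rfl⟩ | ⟨z, rfl⟩
  · exact le_inl_inr.mpr ⟨y, le_rfl, le_top⟩
  · exact le_inr_inr.mpr le_top

end Ext5
end Aux

/-- Let `σ : Π → Γ` be a strong formal subdivision of rank `0` between
lower Eulerian posets, where `Γ = G` is a lower order ideal in an Eulerian poset `B` of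
rank `n`.  Then the extension `Π̃` of `Π` over `B` is lower Eulerian (of rank `n`) and the
extension `σ̃ : Π̃ → B` is a strong formal subdivision; moreover if `Γ ⊊ B` then `Π̃`
is Eulerian. -/
theorem extension_isSFS
    (α β : Type) [PartialOrder α] [Finite α] [OrderBot α]
    [PartialOrder β] [Finite β] [OrderBot β] [OrderTop β] (n m : ℕ)
    (hB : IsEulerianOfRank β n)
    (G : Set β) (hG : IsLowerSet G) (hGle : IsLowerEulerianSetOfRank G m)
    (hPi : IsLowerEulerianOfRank α m)
    (σ : α → G) (hσ : IsSFS σ) :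
    IsLowerEulerianOfRank (ExtP (fun y => (σ y : β)) G) n ∧
    IsSFS (ExtP.extMap (fun y => (σ y : β)) G) ∧
    (G ≠ Set.univ → IsEulerianOfRank (ExtP (fun y => (σ y : β)) G) n) := by
  obtain ⟨-, -, hBgr, hBbal⟩ := hB
  obtain ⟨-, hPgr, hPbal⟩ := hPi
  refine ⟨⟨⟨Aux.mkInl σ ⊥, Aux.ext_bot hG hσ.2.2.1⟩,
      Aux.ext_graded hG hσ hBgr hPgr hGle.1,
      Aux.ext_balanced hG hσ hBgr hBbal hPbal⟩,
    Aux.ext_sfs hG hσ hBgr, ?_⟩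
  intro hU
  exact ⟨⟨Aux.mkInl σ ⊥, Aux.ext_bot hG hσ.2.2.1⟩,
    ⟨Aux.mkInr σ ⟨⊤, Aux.top_not_mem hG hU⟩, Aux.ext_top hG hU⟩,
    Aux.ext_graded hG hσ hBgr hPgr hGle.1,
    Aux.ext_balanced hG hσ hBgr hBbal hPbal⟩


end CDIndex
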